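/- Every connected cubic (3-regular) graph that is not isomorphic to K₄ contains an edge that is not contained in any triangle. -/

import Mathlib

set_option maxHeartbeats 1000000

open SimpleGraph

/-- If a vertex has degree 3 and three distinct neighbours, they are all its neighbours. -/
lemma nbhd_eq3 {V : Type*} [Fintype V] [DecidableEq V] (G : SimpleGraph V) [DecidableRel G.Adj]
    {u p q r : V} (hd : G.degree u = 3) (hp : G.Adj u p) (hq : G.Adj u q) (hr : G.Adj u r)
    (hpq : p ≠ q) (hpr : p ≠ r) (hqr : q ≠ r) :
    G.neighborFinset u = {p, q, r} := by
  have hsub : ({p, q, r} : Finset V) ⊆ G.neighborFinset u := by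
    intro x hx
    simp only [Finset.mem_insert, Finset.mem_singleton] at hx
    rcases hx with rfl | rfl | rfl <;> simpa [mem_neighborFinset] using ‹_›
  have hcard : ({p, q, r} : Finset V).card = 3 := by
    rw [Finset.card_insert_of_notMem (by simp [hpq, hpr]),
        Finset.card_insert_of_notMem (by simp [hqr]), Finset.card_singleton]
  have h3 : (G.neighborFinset u).card = 3 := by
    rw [G.card_neighborFinset_eq_degree]; exact hd
  exact (Finset.eq_of_subset_of_card_le hsub (by rw [h3, hcard])).symm

lemma no_tri_aux {V : Type*} [Fintype V] [DecidableEq V] {G : SimpleGraph V} [DecidableRel G.Adj]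
    (hcubic : ∀ v : V, G.degree v = 3)
    (h : ∀ u v : V, G.Adj u v → ∃ w, G.Adj u w ∧ G.Adj v w)
    {v a b c : V} (hva : G.Adj v a) (hvb : G.Adj v b) (hvc : G.Adj v c)
    (hab : G.Adj a b) (hac : G.Adj a c) (hbc : ¬ G.Adj b c) (hbcne : b ≠ c) : False := by
  have hNv : G.neighborFinset v = {a, b, c} :=
    nbhd_eq3 G (hcubic v) hva hvb hvc hab.ne hac.ne hbcne
  have hNa : G.neighborFinset a = {v, b, c} :=
    nbhd_eq3 G (hcubic a) hva.symm hab hac hvb.ne hvc.ne hbcne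
  -- find the third neighbour x of b
  have hnsub : ¬ (G.neighborFinset b ⊆ {v, a}) := by
    intro hsub
    have h1 := Finset.card_le_card hsub
    have h2 : ({v, a} : Finset V).card ≤ 2 := (Finset.card_insert_le _ _).trans (by simp)
    have h3 : (G.neighborFinset b).card = 3 := by
      rw [G.card_neighborFinset_eq_degree]; exact hcubic b
    omega
  obtain ⟨x, hxN, hx⟩ := Finset.not_subset.mp hnsub
  simp only [Finset.mem_insert, Finset.mem_singleton, not_or] at hx
  have hbx : G.Adj b x := (mem_neighborFinset _ _ _).mp hxN
  have hxc : x ≠ c := fun e => hbc (e ▸ hbx)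
  have hNb : G.neighborFinset b = {v, a, x} :=
    nbhd_eq3 G (hcubic b) hvb.symm hab.symm hbx hva.ne (Ne.symm hx.1) (Ne.symm hx.2)
  obtain ⟨w, hbw, hxw⟩ := h b x hbx
  have hw : w ∈ ({v, a, x} : Finset V) := hNb ▸ (mem_neighborFinset _ _ _).mpr hbw
  simp only [Finset.mem_insert, Finset.mem_singleton] at hw
  rcases hw with rfl | rfl | rfl
  · -- w = v : x is a neighbour of v
    have hx2 : x ∈ ({a, b, c} : Finset V) := hNv ▸ (mem_neighborFinset _ _ _).mpr hxw.symm
    simp only [Finset.mem_insert, Finset.mem_singleton] at hx2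
    rcases hx2 with rfl | rfl | rfl
    · exact hx.2 rfl
    · exact hbx.ne rfl
    · exact hxc rfl
  · -- w = a : x is a neighbour of a
    have hx2 : x ∈ ({v, b, c} : Finset V) := hNa ▸ (mem_neighborFinset _ _ _).mpr hxw.symm
    simp only [Finset.mem_insert, Finset.mem_singleton] at hx2
    rcases hx2 with rfl | rfl | rfl
    · exact hx.1 rfl
    · exact hbx.ne rfl
    · exact hxc rfl
  · exact hxw.ne rfl

lemma walk_closed {V : Type*} {G : SimpleGraph V} {S : Set V}
    (hS : ∀ x ∈ S, ∀ y, G.Adj x y → y ∈ S) :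
    ∀ {x u : V}, G.Walk x u → x ∈ S → u ∈ S := by
  intro x u p
  induction p with
  | nil => exact id
  | cons hadj _ ih => intro hx; exact ih (hS _ hx _ hadj)

/-- Every connected cubic (3-regular) graph that is not isomorphic to `K₄`
contains an edge that is not contained in any triangle. -/
theorem stmt0 {V : Type*} [Fintype V] (G : SimpleGraph V) [DecidableRel G.Adj]
    (hcubic : ∀ v : V, G.degree v = 3) (hconn : G.Connected)
    (hK4 : ¬ Nonempty (G ≃g (completeGraph (Fin 4)))) :
    ∃ u v : V, G.Adj u v ∧ ∀ w : V, ¬ (G.Adj u w ∧ G.Adj v w) := by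
  have _inst : DecidableEq V := Classical.decEq V
  by_contra hcon
  push_neg at hcon
  obtain ⟨v⟩ := hconn.nonempty
  have hv3 : (G.neighborFinset v).card = 3 := by
    rw [G.card_neighborFinset_eq_degree]; exact hcubic v
  obtain ⟨a, b, c, hab0, hac0, hbc0, hset⟩ := Finset.card_eq_three.mp hv3
  have hmem : ∀ x, x ∈ ({a, b, c} : Finset V) → G.Adj v x := by
    intro x hx; rw [← hset] at hx; exact (mem_neighborFinset _ _ _).mp hx
  have hva : G.Adj v a := hmem a (by simp)
  have hvb : G.Adj v b := hmem b (by simp)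
  have hvc : G.Adj v c := hmem c (by simp)
  have tri : ∀ p : V, G.Adj v p → ∃ w, w ∈ ({a, b, c} : Finset V) ∧ w ≠ p ∧ G.Adj p w := by
    intro p hp
    obtain ⟨w, hvw, hpw⟩ := hcon v p hp
    refine ⟨w, ?_, hpw.ne', hpw⟩
    rw [← hset]; exact (mem_neighborFinset _ _ _).mpr hvw
  have ha : G.Adj a b ∨ G.Adj a c := by
    obtain ⟨w, hw, hwa, haw⟩ := tri a hva
    simp only [Finset.mem_insert, Finset.mem_singleton] at hw
    rcases hw with rfl | rfl | rfl
    · exact absurd rfl hwa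
    · exact Or.inl haw
    · exact Or.inr haw
  have hb : G.Adj b a ∨ G.Adj b c := by
    obtain ⟨w, hw, hwb, hbw⟩ := tri b hvb
    simp only [Finset.mem_insert, Finset.mem_singleton] at hw
    rcases hw with rfl | rfl | rfl
    · exact Or.inl hbw
    · exact absurd rfl hwb
    · exact Or.inr hbw
  have hc : G.Adj c a ∨ G.Adj c b := by
    obtain ⟨w, hw, hwc, hcw⟩ := tri c hvc
    simp only [Finset.mem_insert, Finset.mem_singleton] at hw
    rcases hw with rfl | rfl | rfl
    · exact Or.inl hcw
    · exact Or.inr hcw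
    · exact absurd rfl hwc
  have hab : G.Adj a b := by
    by_cases h1 : G.Adj a b
    · exact h1
    · exfalso
      have hac' : G.Adj a c := ha.resolve_left h1
      have hbc' : G.Adj b c := hb.resolve_left (fun h => h1 h.symm)
      exact no_tri_aux hcubic hcon hvc hva hvb hac'.symm hbc'.symm h1 hab0
  have hac : G.Adj a c := by
    by_cases h1 : G.Adj a c
    · exact h1
    · exfalso
      have hbc' : G.Adj b c := (hc.resolve_left (fun h => h1 h.symm)).symm
      exact no_tri_aux hcubic hcon hvb hva hvc hab.symm hbc' h1 hac0
  have hbc : G.Adj b c := by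
    by_cases h1 : G.Adj b c
    · exact h1
    · exact absurd (no_tri_aux hcubic hcon hva hvb hvc hab hac h1 hbc0) not_false
  have hNv : G.neighborFinset v = {a, b, c} := hset
  have hNa : G.neighborFinset a = {v, b, c} :=
    nbhd_eq3 G (hcubic a) hva.symm hab hac hvb.ne hvc.ne hbc0
  have hNb : G.neighborFinset b = {v, a, c} :=
    nbhd_eq3 G (hcubic b) hvb.symm hab.symm hbc hva.ne hvc.ne hac0
  have hNc : G.neighborFinset c = {v, a, b} :=
    nbhd_eq3 G (hcubic c) hvc.symm hac.symm hbc.symm hva.ne hvb.ne hab0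
  have closed : ∀ x ∈ ({v, a, b, c} : Set V), ∀ y, G.Adj x y → y ∈ ({v, a, b, c} : Set V) := by
    intro x hx y hxy
    have key : ∀ N : Finset V, G.neighborFinset x = N → y ∈ N := by
      intro N hN; rw [← hN]; exact (mem_neighborFinset _ _ _).mpr hxy
    simp only [Set.mem_insert_iff, Set.mem_singleton_iff] at hx ⊢
    rcases hx with rfl | rfl | rfl | rfl
    · have h := key _ hNv; simp only [Finset.mem_insert, Finset.mem_singleton] at h
      tauto
    · have h := key _ hNa; simp only [Finset.mem_insert, Finset.mem_singleton] at h
      tauto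
    · have h := key _ hNb; simp only [Finset.mem_insert, Finset.mem_singleton] at h
      tauto
    · have h := key _ hNc; simp only [Finset.mem_insert, Finset.mem_singleton] at h
      tauto
  have hall : ∀ x : V, x = v ∨ x = a ∨ x = b ∨ x = c := by
    intro x
    have hr : G.Reachable v x := hconn.preconnected v x
    have hx : x ∈ ({v, a, b, c} : Set V) :=
      hr.elim fun p => walk_closed closed p (by left; rfl)
    simpa [Set.mem_insert_iff, Set.mem_singleton_iff] using hx
  have adj_iff : ∀ u w : V, G.Adj u w ↔ u ≠ w := by
    intro u w
    constructor
    · exact Adj.ne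
    · intro hne
      rcases hall u with rfl | rfl | rfl | rfl <;> rcases hall w with rfl | rfl | rfl | rfl <;>
        first
          | exact (hne rfl).elim
          | exact hva | exact hvb | exact hvc | exact hab | exact hac | exact hbc
          | exact hva.symm | exact hvb.symm | exact hvc.symm
          | exact hab.symm | exact hac.symm | exact hbc.symm
  have huniv : (Finset.univ : Finset V) = {v, a, b, c} := by
    refine (Finset.eq_univ_iff_forall.mpr fun x => ?_).symm
    simp only [Finset.mem_insert, Finset.mem_singleton]
    exact hall x
  have hcard : Fintype.card V = 4 := by
    rw [← Finset.card_univ, huniv]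
    rw [Finset.card_insert_of_notMem (by simp [hva.ne, hvb.ne, hvc.ne]),
        Finset.card_insert_of_notMem (by simp [hab0, hac0]),
        Finset.card_insert_of_notMem (by simp [hbc0]), Finset.card_singleton]
  have e : V ≃ Fin 4 := Fintype.equivFinOfCardEq hcard
  refine hK4 ⟨⟨e, ?_⟩⟩
  intro u w
  simp only [completeGraph_eq_top, top_adj, ne_eq, EmbeddingLike.apply_eq_iff_eq]
  rw [adj_iff]
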